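/- (Main theorem, quantitative asymptotic regularity) Let T be a κ-strict pseudo-contraction on a nonempty convex subset C of a Hilbert space, (λₙ) a sequence in (κ,1) with θ : ℕ → ℕ a rate of divergence for ∑(λₙ-κ)(1-λₙ) (i.e., ∑_{k=0}^{θ(n)} (λ_k-κ)(1-λ_k) ≥ n for all n). Let x ∈ C, b > 0 with ‖x - Tx‖ ≤ b, and assume T has approximate fixed points in a b-neighborhood of x. Then for all ε > 0 and all n ≥ θ(⌈b²/ε²⌉), ‖xₙ - Txₙ‖ < ε; in particular ‖xₙ - Txₙ‖ → 0. -/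

import Mathlib

open Filter Set

private lemma combo_norm {H : Type*} [NormedAddCommGroup H] [InnerProductSpace ℝ H]
    (u v : H) (t : ℝ) :
    ‖t • u + (1 - t) • v‖ ^ 2 =
      t * ‖u‖ ^ 2 + (1 - t) * ‖v‖ ^ 2 - t * (1 - t) * ‖u - v‖ ^ 2 := by
  have h1 : ‖t • u + (1 - t) • v‖ ^ 2
      = ‖t • u‖ ^ 2 + 2 * inner ℝ (t • u) ((1 - t) • v) + ‖(1 - t) • v‖ ^ 2 :=
    norm_add_sq_real _ _
  have h2 : ‖u - v‖ ^ 2 = ‖u‖ ^ 2 - 2 * inner ℝ u v + ‖v‖ ^ 2 := norm_sub_sq_real _ _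
  rw [h1, norm_smul, norm_smul, real_inner_smul_left, real_inner_smul_right]
  simp only [Real.norm_eq_abs, mul_pow, sq_abs]
  nlinarith [h2]

private lemma residual_core {H : Type*} [NormedAddCommGroup H] [InnerProductSpace ℝ H]
    (D W : H) (lam κ : ℝ)
    (hT : ‖(1 - lam) • D - W‖ ^ 2 ≤ ‖(1 - lam) • D‖ ^ 2 + κ * ‖W‖ ^ 2) :
    (1 - lam) * ‖D - W‖ ^ 2 + (lam - κ) * ‖W‖ ^ 2 ≤ (1 - lam) * ‖D‖ ^ 2 := by
  have e1 : ‖(1 - lam) • D - W‖ ^ 2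
      = ‖(1 - lam) • D‖ ^ 2 - 2 * inner ℝ ((1 - lam) • D) W + ‖W‖ ^ 2 := norm_sub_sq_real _ _
  have e2 : ‖D - W‖ ^ 2 = ‖D‖ ^ 2 - 2 * inner ℝ D W + ‖W‖ ^ 2 := norm_sub_sq_real _ _
  have e3 : ‖(1 - lam) • D‖ ^ 2 = (1 - lam) ^ 2 * ‖D‖ ^ 2 := by
    rw [norm_smul, Real.norm_eq_abs, mul_pow, sq_abs]
  have e4 : (inner ℝ ((1 - lam) • D) W : ℝ) = (1 - lam) * inner ℝ D W := real_inner_smul_left _ _ _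
  rw [e1, e3, e4] at hT
  rw [e2]
  nlinarith [hT]

private lemma residual_step {H : Type*} [NormedAddCommGroup H] [InnerProductSpace ℝ H]
    (u u' Tu Tu' : H) (lam κ : ℝ)
    (hrec : u' = lam • u + (1 - lam) • Tu)
    (hT : ‖Tu - Tu'‖ ^ 2 ≤ ‖u - u'‖ ^ 2 + κ * ‖(u - Tu) - (u' - Tu')‖ ^ 2) :
    (1 - lam) * ‖u' - Tu'‖ ^ 2 + (lam - κ) * ‖(u - Tu) - (u' - Tu')‖ ^ 2
      ≤ (1 - lam) * ‖u - Tu‖ ^ 2 := by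
  have h1 : u - u' = (1 - lam) • (u - Tu) := by rw [hrec]; module
  have h2 : Tu - Tu' = (1 - lam) • (u - Tu) - ((u - Tu) - (u' - Tu')) := by
    rw [← h1]; abel
  have h3 : u' - Tu' = (u - Tu) - ((u - Tu) - (u' - Tu')) := by abel
  rw [h2, h1] at hT
  nth_rewrite 1 [h3]
  exact residual_core _ _ _ _ hT

private lemma lipschitz_of_hT (t s κ : ℝ) (ht : 0 ≤ t) (hs : 0 ≤ s) (hκ : 0 ≤ κ) (hκ1 : κ < 1)
    (h : t ^ 2 ≤ s ^ 2 + κ * (s + t) ^ 2) : (1 - κ) * t ≤ (1 + κ) * s := by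
  rcases eq_or_lt_of_le (add_nonneg hs ht) with h0 | h0
  · have hs0 : s = 0 := by nlinarith
    have ht0 : t = 0 := by nlinarith
    simp [hs0, ht0]
  · nlinarith [h0, h]

private lemma sqrt_bound (t s r κ : ℝ) (ht : 0 ≤ t) (hs : 0 ≤ s) (hr : 0 ≤ r) (hκ : κ ≤ 1)
    (hκ0 : 0 ≤ κ) (h : t ^ 2 ≤ s ^ 2 + κ * r ^ 2) : t ≤ s + r := by
  nlinarith [mul_nonneg hs hr]

set_option maxHeartbeats 1000000 in
private lemma fejer_step {H : Type*} [NormedAddCommGroup H] [InnerProductSpace ℝ H]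
    (u u' Tu p Tp : H) (lam κ δ b R : ℝ)
    (hκ0 : 0 ≤ κ) (hκ1 : κ < 1) (hl1 : κ < lam) (hl2 : lam < 1)
    (hδ0 : 0 ≤ δ) (hδ1 : δ ≤ 1) (hbR : 0 ≤ R) (hb : 0 < b)
    (hrec : u' = lam • u + (1 - lam) • Tu)
    (hT : ‖Tu - Tp‖ ^ 2 ≤ ‖u - p‖ ^ 2 + κ * ‖(u - Tu) - (p - Tp)‖ ^ 2)
    (hd : ‖u - Tu‖ ≤ b) (hp : ‖p - Tp‖ ≤ δ) (hup : ‖u - p‖ ≤ R) :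
    ‖u' - p‖ ^ 2 ≤ ‖u - p‖ ^ 2 - (lam - κ) * (1 - lam) * ‖u - Tu‖ ^ 2
      + δ * (2 * R + 4 * b + 4) := by
  have hcv : u' - p = lam • (u - p) + (1 - lam) • (Tu - p) := by rw [hrec]; module
  have hdd : (u - p) - (Tu - p) = u - Tu := by abel
  have h1 : ‖u' - p‖ ^ 2 = lam * ‖u - p‖ ^ 2 + (1 - lam) * ‖Tu - p‖ ^ 2
      - lam * (1 - lam) * ‖u - Tu‖ ^ 2 := by
    rw [hcv, combo_norm, hdd]
  have hw : ‖(u - Tu) - (p - Tp)‖ ≤ ‖u - Tu‖ + δ :=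
    le_trans (norm_sub_le _ _) (by linarith)
  have hw2 : κ * ‖(u - Tu) - (p - Tp)‖ ^ 2 ≤ κ * ‖u - Tu‖ ^ 2 + δ * (2 * b + 1) := by
    have h2 : ‖(u - Tu) - (p - Tp)‖ ^ 2 ≤ (‖u - Tu‖ + δ) ^ 2 := by
      have := norm_nonneg ((u - Tu) - (p - Tp))
      nlinarith
    have e1 : κ * ‖(u - Tu) - (p - Tp)‖ ^ 2 ≤ κ * (‖u - Tu‖ + δ) ^ 2 :=
      mul_le_mul_of_nonneg_left h2 hκ0
    nlinarith [mul_nonneg hδ0 (sub_nonneg.mpr hd),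
      mul_nonneg (mul_nonneg hδ0 (norm_nonneg (u - Tu))) (sub_nonneg.mpr hκ1.le),
      mul_nonneg hδ0 (sub_nonneg.mpr hδ1),
      mul_nonneg (mul_nonneg hδ0 hδ0) (sub_nonneg.mpr hκ1.le)]
  have hT2 : ‖Tu - Tp‖ ^ 2 ≤ ‖u - p‖ ^ 2 + κ * ‖u - Tu‖ ^ 2 + δ * (2 * b + 1) := by
    linarith
  have hT3 : ‖Tu - Tp‖ ≤ R + b + 1 := by
    have := sqrt_bound ‖Tu - Tp‖ ‖u - p‖ ‖(u - Tu) - (p - Tp)‖ κ (norm_nonneg _)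
      (norm_nonneg _) (norm_nonneg _) hκ1.le hκ0 hT
    linarith
  have hTup : ‖Tu - p‖ ≤ ‖Tu - Tp‖ + δ := by
    have h4 := norm_sub_le (Tu - Tp) (p - Tp)
    have he : (Tu - Tp) - (p - Tp) = Tu - p := by abel
    rw [he] at h4
    linarith
  have hTup2 : ‖Tu - p‖ ^ 2 ≤ ‖u - p‖ ^ 2 + κ * ‖u - Tu‖ ^ 2 + δ * (2 * R + 4 * b + 4) := by
    have h2 : ‖Tu - p‖ ^ 2 ≤ (‖Tu - Tp‖ + δ) ^ 2 := by
      have := norm_nonneg (Tu - p)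
      nlinarith
    nlinarith [mul_nonneg hδ0 (sub_nonneg.mpr hT3), mul_nonneg hδ0 (sub_nonneg.mpr hδ1)]
  have herr : (0:ℝ) ≤ δ * (2 * R + 4 * b + 4) := by positivity
  have hlam0 : (0:ℝ) ≤ lam := le_trans hκ0 hl1.le
  have e5 : (1 - lam) * ‖Tu - p‖ ^ 2
      ≤ (1 - lam) * (‖u - p‖ ^ 2 + κ * ‖u - Tu‖ ^ 2 + δ * (2 * R + 4 * b + 4)) :=
    mul_le_mul_of_nonneg_left hTup2 (by linarith)
  nlinarith [h1, e5, mul_nonneg hlam0 herr]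

private lemma limit_helper (t c A K : ℝ) (hA : 0 ≤ A) (hK : 0 ≤ K)
    (h : ∀ δ : ℝ, 0 < δ → δ ≤ 1 → t ≤ c + A * Real.sqrt (δ * K) + δ) : t ≤ c := by
  have hc : ContinuousAt (fun δ : ℝ => c + A * Real.sqrt (δ * K) + δ) 0 := by
    fun_prop
  have htend : Tendsto (fun δ : ℝ => c + A * Real.sqrt (δ * K) + δ)
      (nhdsWithin 0 (Set.Ioi 0)) (nhds c) := by
    have h2 := hc.tendsto
    simp only [zero_mul, Real.sqrt_zero, mul_zero, add_zero] at h2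
    exact h2.mono_left nhdsWithin_le_nhds
  refine ge_of_tendsto htend ?_
  filter_upwards [Ioc_mem_nhdsGT_of_mem (Set.mem_Ico.mpr ⟨le_refl (0:ℝ), zero_lt_one⟩)] with δ hδ
  exact h δ hδ.1 hδ.2

set_option maxHeartbeats 2000000 in
theorem stmt_8 {H : Type*} [NormedAddCommGroup H] [InnerProductSpace ℝ H]
    (C : Set H) (hCne : C.Nonempty) (hCconv : Convex ℝ C)
    (κ : ℝ) (hκ0 : 0 ≤ κ) (hκ1 : κ < 1)
    (T : H → H) (hTmap : Set.MapsTo T C C)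
    (hT : ∀ u ∈ C, ∀ v ∈ C,
      ‖T u - T v‖ ^ 2 ≤ ‖u - v‖ ^ 2 + κ * ‖(u - T u) - (v - T v)‖ ^ 2)
    (lam : ℕ → ℝ) (hlam : ∀ n, lam n ∈ Set.Ioo κ 1)
    (θ : ℕ → ℕ)
    (hθ : ∀ n : ℕ, (n : ℝ) ≤ ∑ k ∈ Finset.range (θ n + 1), (lam k - κ) * (1 - lam k))
    (x : ℕ → H) (hx0 : x 0 ∈ C)
    (hxrec : ∀ n, x (n + 1) = lam n • x n + (1 - lam n) • T (x n))
    (b : ℝ) (hb : 0 < b) (hxb : ‖x 0 - T (x 0)‖ ≤ b)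
    (hafp : ∀ δ > (0:ℝ), ∃ y ∈ C, ‖x 0 - y‖ ≤ b ∧ ‖y - T y‖ < δ) :
    (∀ ε > (0:ℝ), ∀ n : ℕ, θ ⌈b ^ 2 / ε ^ 2⌉₊ ≤ n → ‖x n - T (x n)‖ < ε) ∧
      Filter.Tendsto (fun n => ‖x n - T (x n)‖) Filter.atTop (nhds 0) := by
  have hlam1 : ∀ k, 0 < 1 - lam k := fun k => by linarith [(hlam k).2]
  have hlamκ : ∀ k, 0 < lam k - κ := fun k => by linarith [(hlam k).1]
  have hlam0 : ∀ k, 0 ≤ lam k := fun k => le_trans hκ0 (hlam k).1.le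
  -- all iterates in C
  have hxC : ∀ k, x k ∈ C := by
    intro k
    induction k with
    | zero => exact hx0
    | succ k ih =>
      rw [hxrec]
      exact hCconv ih (hTmap ih) (hlam0 k) (hlam1 k).le (by ring)
  -- residual inequality
  have hres : ∀ k, (1 - lam k) * ‖x (k+1) - T (x (k+1))‖ ^ 2
      + (lam k - κ) * ‖(x k - T (x k)) - (x (k+1) - T (x (k+1)))‖ ^ 2
      ≤ (1 - lam k) * ‖x k - T (x k)‖ ^ 2 := fun k =>
    residual_step (x k) (x (k+1)) (T (x k)) (T (x (k+1))) (lam k) κ (hxrec k)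
      (hT _ (hxC k) _ (hxC (k+1)))
  -- monotone residuals
  have hmono1 : ∀ k, ‖x (k+1) - T (x (k+1))‖ ≤ ‖x k - T (x k)‖ := by
    intro k
    have h1 := hres k
    have h2 : (0:ℝ) ≤ (lam k - κ) * ‖(x k - T (x k)) - (x (k+1) - T (x (k+1)))‖ ^ 2 :=
      mul_nonneg (hlamκ k).le (sq_nonneg _)
    have h3 : ‖x (k+1) - T (x (k+1))‖ ^ 2 ≤ ‖x k - T (x k)‖ ^ 2 := by
      nlinarith [h1, h2, hlam1 k]
    rw [← Real.sqrt_sq (norm_nonneg (x (k+1) - T (x (k+1)))),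
      ← Real.sqrt_sq (norm_nonneg (x k - T (x k)))]
    exact Real.sqrt_le_sqrt h3
  have hantitone : Antitone (fun k => ‖x k - T (x k)‖) := antitone_nat_of_succ_le hmono1
  have hmono : ∀ j k : ℕ, j ≤ k → ‖x k - T (x k)‖ ≤ ‖x j - T (x j)‖ :=
    fun j k h => hantitone h
  have hdb : ∀ k, ‖x k - T (x k)‖ ≤ b := fun k => (hmono 0 k (Nat.zero_le k)).trans hxb
  -- step size
  have hstepnorm : ∀ k, ‖x (k+1) - x k‖ ≤ b := by
    intro k
    have h1 : x (k+1) - x k = (1 - lam k) • (T (x k) - x k) := by rw [hxrec]; module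
    rw [h1, norm_smul, Real.norm_eq_abs, abs_of_pos (hlam1 k), norm_sub_rev]
    calc (1 - lam k) * ‖x k - T (x k)‖ ≤ 1 * b := by
          apply mul_le_mul (by linarith [hlamκ k]) (hdb k) (norm_nonneg _) zero_le_one
      _ = b := one_mul b
  -- distance growth
  have hdist : ∀ q : H, ‖x 0 - q‖ ≤ b → ∀ k, ‖x k - q‖ ≤ ((k:ℝ) + 1) * b := by
    intro q hq k
    induction k with
    | zero => simpa using hq
    | succ k ih =>
      have h1 : ‖x (k+1) - q‖ ≤ ‖x (k+1) - x k‖ + ‖x k - q‖ := by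
        have := norm_add_le (x (k+1) - x k) (x k - q)
        simpa using this
      have := hstepnorm k
      push_cast
      push_cast at ih
      linarith
  -- summed Fejér inequality
  have hfej : ∀ p : H, p ∈ C → ∀ δ : ℝ, 0 ≤ δ → δ ≤ 1 → ‖x 0 - p‖ ≤ b → ‖p - T p‖ ≤ δ →
      ∀ m : ℕ, ‖x (m+1) - p‖ ^ 2
        + ∑ k ∈ Finset.range (m+1), (lam k - κ) * (1 - lam k) * ‖x k - T (x k)‖ ^ 2
        ≤ ‖x 0 - p‖ ^ 2 + δ * ∑ k ∈ Finset.range (m+1), (2 * ((k:ℝ) + 1) * b + 4 * b + 4) := by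
    intro p hpC δ hδ0 hδ1 hpb hpT m
    induction m with
    | zero =>
      norm_num [Finset.sum_range_one]
      have h1 := fejer_step (x 0) (x 1) (T (x 0)) p (T p) (lam 0) κ δ b ((((0:ℕ):ℝ) + 1) * b)
        hκ0 hκ1 (hlam 0).1 (hlam 0).2 hδ0 hδ1 (by positivity) hb (hxrec 0)
        (hT _ (hxC 0) _ hpC) (hdb 0) hpT (hdist p hpb 0)
      push_cast at h1 ⊢
      nlinarith [h1]
    | succ m ih =>
      have h1 := fejer_step (x (m+1)) (x (m+2)) (T (x (m+1))) p (T p) (lam (m+1)) κ δ b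
        ((((m+1:ℕ):ℝ) + 1) * b) hκ0 hκ1 (hlam (m+1)).1 (hlam (m+1)).2 hδ0 hδ1 (by positivity) hb
        (hxrec (m+1)) (hT _ (hxC (m+1)) _ hpC) (hdb (m+1)) hpT (hdist p hpb (m+1))
      rw [Finset.sum_range_succ, Finset.sum_range_succ
        (f := fun k => 2 * ((k:ℝ) + 1) * b + 4 * b + 4) (n := m+1)]
      push_cast at h1 ⊢
      nlinarith [h1, ih, hδ0]
  -- Lipschitz property
  have hLip : ∀ u ∈ C, ∀ v ∈ C, (1 - κ) * ‖T u - T v‖ ≤ (1 + κ) * ‖u - v‖ := by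
    intro u hu v hv
    have h1 := hT u hu v hv
    have h2 : ‖(u - T u) - (v - T v)‖ ≤ ‖u - v‖ + ‖T u - T v‖ := by
      have he : (u - T u) - (v - T v) = (u - v) - (T u - T v) := by abel
      rw [he]; exact norm_sub_le _ _
    have h3 : ‖T u - T v‖ ^ 2 ≤ ‖u - v‖ ^ 2 + κ * (‖u - v‖ + ‖T u - T v‖) ^ 2 := by
      have h4 : κ * ‖(u - T u) - (v - T v)‖ ^ 2 ≤ κ * (‖u - v‖ + ‖T u - T v‖) ^ 2 := by
        apply mul_le_mul_of_nonneg_left _ hκ0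
        have := norm_nonneg ((u - T u) - (v - T v))
        nlinarith [h2]
      linarith
    exact lipschitz_of_hT _ _ _ (norm_nonneg _) (norm_nonneg _) hκ0 hκ1 h3
  -- main quantitative statement
  have main : ∀ ε > (0:ℝ), ∀ n : ℕ, θ ⌈b ^ 2 / ε ^ 2⌉₊ ≤ n → ‖x n - T (x n)‖ < ε := by
    intro ε hε n hn
    by_contra hcon
    push_neg at hcon
    set N := ⌈b ^ 2 / ε ^ 2⌉₊ with hN
    set m := θ N with hm
    have hNb : b ^ 2 ≤ ε ^ 2 * N := by
      have h1 : b ^ 2 / ε ^ 2 ≤ (N : ℝ) := Nat.le_ceil _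
      have h2 : (0:ℝ) < ε ^ 2 := by positivity
      rw [div_le_iff₀ h2] at h1
      linarith
    have hdk : ∀ k, k ≤ n → ε ≤ ‖x k - T (x k)‖ := fun k hk => le_trans hcon (hmono k n hk)
    have hdk2 : ∀ k ∈ Finset.range (m+1), ε ^ 2 ≤ ‖x k - T (x k)‖ ^ 2 := by
      intro k hk
      have hkn : k ≤ n := le_trans (Nat.lt_succ_iff.mp (Finset.mem_range.mp hk)) hn
      have := hdk k hkn
      nlinarith [hε]
    have hSN : (N : ℝ) ≤ ∑ k ∈ Finset.range (m+1), (lam k - κ) * (1 - lam k) := hθ N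
    have hlow : ε ^ 2 * N ≤ ∑ k ∈ Finset.range (m+1),
        (lam k - κ) * (1 - lam k) * ‖x k - T (x k)‖ ^ 2 := by
      have h1 : ε ^ 2 * N ≤ ε ^ 2 * ∑ k ∈ Finset.range (m+1), (lam k - κ) * (1 - lam k) :=
        mul_le_mul_of_nonneg_left hSN (by positivity)
      rw [Finset.mul_sum] at h1
      refine le_trans h1 (Finset.sum_le_sum ?_)
      intro k hk
      have h2 := hdk2 k hk
      have h3 : (0:ℝ) ≤ (lam k - κ) * (1 - lam k) := mul_nonneg (hlamκ k).le (hlam1 k).le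
      nlinarith [h2, h3]
    set K := ∑ k ∈ Finset.range (m+1), (2 * ((k:ℝ) + 1) * b + 4 * b + 4) with hK
    have hK0 : (0:ℝ) ≤ K := Finset.sum_nonneg (fun k _ => by positivity)
    -- approximate fixed points close to x (m+1)
    have hXp : ∀ δ : ℝ, 0 < δ → δ ≤ 1 → ∃ p ∈ C, ‖x 0 - p‖ ≤ b ∧ ‖p - T p‖ ≤ δ ∧
        ‖x (m+1) - p‖ ≤ Real.sqrt (δ * K) := by
      intro δ hδ0 hδ1
      obtain ⟨p, hpC, hpb, hpT⟩ := hafp δ hδ0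
      have hf := hfej p hpC δ hδ0.le hδ1 hpb hpT.le m
      have hb2 : ‖x 0 - p‖ ^ 2 ≤ b ^ 2 := by nlinarith [norm_nonneg (x 0 - p)]
      have hsq : ‖x (m+1) - p‖ ^ 2 ≤ δ * K := by linarith [hlow, hNb, hb2, hf]
      have h5 := Real.sqrt_le_sqrt hsq
      rw [Real.sqrt_sq (norm_nonneg _)] at h5
      exact ⟨p, hpC, hpb, hpT.le, h5⟩
    have hzC := hxC (m+1)
    have hL0 : (0:ℝ) ≤ (1 + κ) / (1 - κ) := div_nonneg (by linarith) (by linarith)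
    -- x (m+1) is a fixed point of T
    have hzfix : ‖x (m+1) - T (x (m+1))‖ ≤ 0 := by
      apply limit_helper _ 0 ((1 + κ) / (1 - κ) + 1) K (by linarith) hK0
      intro δ hδ0 hδ1
      obtain ⟨p, hpC, hpb, hpT, hpz⟩ := hXp δ hδ0 hδ1
      have ht1 : dist (x (m+1)) (T (x (m+1)))
          ≤ dist (x (m+1)) p + dist p (T p) + dist (T p) (T (x (m+1))) := dist_triangle4 _ _ _ _
      simp only [dist_eq_norm] at ht1
      have ht2 : ‖T p - T (x (m+1))‖ ≤ (1 + κ) / (1 - κ) * ‖p - x (m+1)‖ := by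
        have := hLip p hpC (x (m+1)) hzC
        rw [div_mul_eq_mul_div, le_div_iff₀ (by linarith)]
        linarith
      have ht3 : ‖p - x (m+1)‖ = ‖x (m+1) - p‖ := norm_sub_rev _ _
      have hs0 : (0:ℝ) ≤ Real.sqrt (δ * K) := Real.sqrt_nonneg _
      have ht4 : (1 + κ) / (1 - κ) * ‖p - x (m+1)‖
          ≤ (1 + κ) / (1 - κ) * Real.sqrt (δ * K) := by
        rw [ht3]; exact mul_le_mul_of_nonneg_left hpz hL0
      nlinarith [ht1, ht2, ht4, hpT, hpz]
    have hzfixv : T (x (m+1)) = x (m+1) := by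
      have h1 : ‖x (m+1) - T (x (m+1))‖ = 0 := le_antisymm hzfix (norm_nonneg _)
      exact (sub_eq_zero.mp (norm_eq_zero.mp h1)).symm
    rcases eq_or_lt_of_le hn with hmn | hmn
    · -- hard case : n = m
      clear hmn
      -- x 0 is within b of the fixed point x (m+1)
      have hx0z : ‖x 0 - x (m+1)‖ ≤ b := by
        apply limit_helper _ b 1 K zero_le_one hK0
        intro δ hδ0 hδ1
        obtain ⟨p, hpC, hpb, hpT, hpz⟩ := hXp δ hδ0 hδ1
        have h1 : dist (x 0) (x (m+1)) ≤ dist (x 0) p + dist p (x (m+1)) := dist_triangle _ _ _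
        simp only [dist_eq_norm] at h1
        have h2 : ‖p - x (m+1)‖ = ‖x (m+1) - p‖ := norm_sub_rev _ _
        nlinarith [h1, hpz, hδ0]
      -- exact Fejér inequality with the fixed point x (m+1)
      have hupper := hfej (x (m+1)) hzC 0 le_rfl zero_le_one hx0z hzfix m
      simp only [sub_self, norm_zero, zero_mul, zero_add, add_zero] at hupper
      rw [show ((0:ℝ)) ^ 2 = 0 by norm_num] at hupper
      have hA0b : ‖x 0 - x (m+1)‖ ^ 2 ≤ b ^ 2 := by
        nlinarith [norm_nonneg (x 0 - x (m+1))]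
      -- shorthands
      set SS := ∑ k ∈ Finset.range (m+1), (lam k - κ) * (1 - lam k) with hSSdef
      set Sig := ∑ k ∈ Finset.range (m+1),
        (lam k - κ) * (1 - lam k) * ‖x k - T (x k)‖ ^ 2 with hSigdef
      have hεSS : ε ^ 2 * SS ≤ Sig := by
        rw [hSSdef, hSigdef, Finset.mul_sum]
        refine Finset.sum_le_sum ?_
        intro k hk
        have h2 := hdk2 k hk
        have h3 : (0:ℝ) ≤ (lam k - κ) * (1 - lam k) := mul_nonneg (hlamκ k).le (hlam1 k).le
        nlinarith [h2, h3]
      have hε2 : (0:ℝ) < ε ^ 2 := by positivity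
      -- the squeeze: everything is an equality
      have hSNε : ε ^ 2 * (N:ℝ) ≤ ε ^ 2 * SS := mul_le_mul_of_nonneg_left hSN hε2.le
      have hSigeq : Sig = ε ^ 2 * SS := by linarith
      have hA0Sig : ‖x 0 - x (m+1)‖ ^ 2 = Sig := by linarith
      -- all residuals equal ε
      have hdeq : ∀ k ∈ Finset.range (m+1), ‖x k - T (x k)‖ = ε := by
        have h0 : ∑ k ∈ Finset.range (m+1),
            ((lam k - κ) * (1 - lam k) * ‖x k - T (x k)‖ ^ 2
              - (lam k - κ) * (1 - lam k) * ε ^ 2) = 0 := by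
          rw [Finset.sum_sub_distrib]
          have h1 : ∑ k ∈ Finset.range (m+1), (lam k - κ) * (1 - lam k) * ε ^ 2
              = SS * ε ^ 2 := by rw [hSSdef, Finset.sum_mul]
          rw [h1, ← hSigdef]
          linarith
        have hnn : ∀ i ∈ Finset.range (m+1),
            (0:ℝ) ≤ (lam i - κ) * (1 - lam i) * ‖x i - T (x i)‖ ^ 2
              - (lam i - κ) * (1 - lam i) * ε ^ 2 := by
          intro i hi
          have h2 := hdk2 i hi
          have h3 : (0:ℝ) ≤ (lam i - κ) * (1 - lam i) := mul_nonneg (hlamκ i).le (hlam1 i).le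
          nlinarith [h2, h3]
        intro k hk
        have h2 := (Finset.sum_eq_zero_iff_of_nonneg hnn).mp h0 k hk
        have hsk : 0 < (lam k - κ) * (1 - lam k) := mul_pos (hlamκ k) (hlam1 k)
        have h3 : ‖x k - T (x k)‖ ^ 2 = ε ^ 2 := by
          have h4 : (lam k - κ) * (1 - lam k) * ‖x k - T (x k)‖ ^ 2
              = (lam k - κ) * (1 - lam k) * ε ^ 2 := by linarith
          exact mul_left_cancel₀ hsk.ne' h4
        rw [← Real.sqrt_sq (norm_nonneg (x k - T (x k))), h3, Real.sqrt_sq hε.le]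
      -- the residual vector is constant
      have hdstep : ∀ k, k < m → x k - T (x k) = x (k+1) - T (x (k+1)) := by
        intro k hk
        have h1 := hres k
        rw [hdeq k (Finset.mem_range.mpr (by omega)),
          hdeq (k+1) (Finset.mem_range.mpr (by omega))] at h1
        have h2 : ‖(x k - T (x k)) - (x (k+1) - T (x (k+1)))‖ ^ 2 ≤ 0 := by
          nlinarith [hlamκ k]
        have h4 : ‖(x k - T (x k)) - (x (k+1) - T (x (k+1)))‖ ^ 2 = 0 :=
          le_antisymm h2 (sq_nonneg _)
        exact sub_eq_zero.mp (norm_eq_zero.mp (pow_eq_zero_iff two_ne_zero |>.mp h4))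
      have hdconst : ∀ k, k ≤ m → x k - T (x k) = x m - T (x m) := by
        have haux : ∀ j, ∀ k, k + j = m → x k - T (x k) = x m - T (x m) := by
          intro j
          induction j with
          | zero => intro k hk; rw [show k = m by omega]
          | succ j ih =>
            intro k hk
            rw [hdstep k (by omega)]
            exact ih (k+1) (by omega)
        intro k hk
        exact haux (m - k) k (by omega)
      have hdm : ‖x m - T (x m)‖ = ε := hdeq m (Finset.mem_range.mpr (by omega))
      -- explicit formula for x k - x (m+1)
      have hxz : ∀ j, ∀ k, k + j = m + 1 →
          x k - x (m+1) = (∑ i ∈ Finset.Ico k (m+1), (1 - lam i)) • (x m - T (x m)) := by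
        intro j
        induction j with
        | zero =>
          intro k hk
          rw [show k = m + 1 by omega]
          simp
        | succ j ih =>
          intro k hk
          have hkm : k < m + 1 := by omega
          have h1 : x k - x (m+1) = (x k - x (k+1)) + (x (k+1) - x (m+1)) := by abel
          have h2 : x k - x (k+1) = (1 - lam k) • (x k - T (x k)) := by
            rw [hxrec]; module
          rw [h1, h2, hdconst k (by omega), ih (k+1) (by omega),
            Finset.sum_eq_sum_Ico_succ_bot hkm, add_smul]
      have hSknn : ∀ k, (0:ℝ) ≤ ∑ i ∈ Finset.Ico k (m+1), (1 - lam i) :=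
        fun k => Finset.sum_nonneg (fun i _ => (hlam1 i).le)
      have hnormS : ∀ k, k ≤ m + 1 → ‖x k - x (m+1)‖ ^ 2
          = (∑ i ∈ Finset.Ico k (m+1), (1 - lam i)) ^ 2 * ε ^ 2 := by
        intro k hk
        rw [hxz (m+1-k) k (by omega), norm_smul, Real.norm_eq_abs,
          abs_of_nonneg (hSknn k), mul_pow, hdm]
      -- per-step defects are nonnegative
      have hD : ∀ k ∈ Finset.range (m+1), (0:ℝ) ≤ ‖x k - x (m+1)‖ ^ 2
          - (lam k - κ) * (1 - lam k) * ε ^ 2 - ‖x (k+1) - x (m+1)‖ ^ 2 := by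
        intro k hk
        have h1 := fejer_step (x k) (x (k+1)) (T (x k)) (x (m+1)) (T (x (m+1))) (lam k) κ 0 b
          (‖x k - x (m+1)‖) hκ0 hκ1 (hlam k).1 (hlam k).2 le_rfl zero_le_one (norm_nonneg _) hb
          (hxrec k) (hT _ (hxC k) _ hzC) (hdb k) hzfix le_rfl
        rw [hdeq k hk] at h1
        nlinarith [h1]
      -- and they sum to zero
      have hDsum : ∑ k ∈ Finset.range (m+1), (‖x k - x (m+1)‖ ^ 2
          - (lam k - κ) * (1 - lam k) * ε ^ 2 - ‖x (k+1) - x (m+1)‖ ^ 2) = 0 := by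
        have h1 : ∑ k ∈ Finset.range (m+1),
            (‖x k - x (m+1)‖ ^ 2 - ‖x (k+1) - x (m+1)‖ ^ 2)
            = ‖x 0 - x (m+1)‖ ^ 2 - ‖x (m+1) - x (m+1)‖ ^ 2 :=
          Finset.sum_range_sub' (fun k => ‖x k - x (m+1)‖ ^ 2) (m+1)
        have h2 : ∀ k ∈ Finset.range (m+1), ‖x k - x (m+1)‖ ^ 2
            - (lam k - κ) * (1 - lam k) * ε ^ 2 - ‖x (k+1) - x (m+1)‖ ^ 2
            = (‖x k - x (m+1)‖ ^ 2 - ‖x (k+1) - x (m+1)‖ ^ 2)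
              - (lam k - κ) * (1 - lam k) * ε ^ 2 := by
          intro k _; ring
        rw [Finset.sum_congr rfl h2, Finset.sum_sub_distrib, h1]
        have h3 : ∑ k ∈ Finset.range (m+1), (lam k - κ) * (1 - lam k) * ε ^ 2
            = SS * ε ^ 2 := by rw [hSSdef, Finset.sum_mul]
        rw [h3]
        have h4 : ‖x (m+1) - x (m+1)‖ = 0 := by simp
        rw [h4]
        linarith [hA0Sig, hSigeq]
      have hDzero := (Finset.sum_eq_zero_iff_of_nonneg hD).mp hDsum
      -- each tail sum equals (1-κ)/2
      have hSk : ∀ k ∈ Finset.range (m+1),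
          2 * (∑ i ∈ Finset.Ico k (m+1), (1 - lam i)) = 1 - κ := by
        intro k hk
        have hk1 : k < m + 1 := Finset.mem_range.mp hk
        have hD0 := hDzero k hk
        rw [hnormS k hk1.le, hnormS (k+1) hk1] at hD0
        have hsplit := Finset.sum_eq_sum_Ico_succ_bot hk1 (fun i => 1 - lam i)
        rw [hsplit] at hD0 ⊢
        have h6 : (1 - lam k) * ((1 - lam k)
            + 2 * (∑ i ∈ Finset.Ico (k+1) (m+1), (1 - lam i)) - (lam k - κ)) * ε ^ 2 = 0 := by
          linear_combination hD0
        rcases mul_eq_zero.mp h6 with h7 | h7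
        · rcases mul_eq_zero.mp h7 with h8 | h8
          · linarith [hlam1 k]
          · linarith
        · linarith [hε2]
      -- final contradiction
      rcases Nat.eq_zero_or_pos m with hm0 | hm0
      · -- m = 0
        have hs0 := hSk 0 (Finset.mem_range.mpr (by omega))
        rw [hm0] at hs0
        rw [← Finset.range_eq_Ico, Finset.sum_range_one] at hs0
        have hNSS : (N:ℝ) = SS := by
          have := mul_le_mul_of_nonneg_left hSN hε2.le
          have h9 : ε ^ 2 * SS ≤ ε ^ 2 * (N:ℝ) := by linarith
          have := mul_le_mul_of_nonneg_left hSN hε2.le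
          nlinarith [hSN, h9, hε2]
        have hSS0 : SS = (lam 0 - κ) * (1 - lam 0) := by
          rw [hSSdef, hm0, Finset.sum_range_one]
        have hN1 : 1 ≤ N := by
          rw [hN]
          exact Nat.one_le_ceil_iff.mpr (by positivity)
        have hN1' : (1:ℝ) ≤ (N:ℝ) := by exact_mod_cast hN1
        nlinarith [hN1', hNSS, hSS0, hs0, hκ0, hlam1 0]
      · -- m ≥ 1
        have hs0 := hSk 0 (Finset.mem_range.mpr (by omega))
        have hs1 := hSk 1 (Finset.mem_range.mpr (by omega))
        have hsplit0 := Finset.sum_eq_sum_Ico_succ_bot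
          (show 0 < m + 1 by omega) (fun i => 1 - lam i)
        rw [← Finset.range_eq_Ico] at hs0
        rw [← Finset.range_eq_Ico] at hsplit0
        linarith [hlam1 0, hs0, hs1, hsplit0]
    · -- easy case : m < n
      linarith [hmono (m+1) n hmn, hzfix, hdk n le_rfl, hε]
  refine ⟨main, ?_⟩
  rw [Metric.tendsto_atTop]
  intro ε hε
  exact ⟨θ ⌈b ^ 2 / ε ^ 2⌉₊, fun n hn => by
    rw [Real.dist_eq, sub_zero, abs_of_nonneg (norm_nonneg _)]
    exact main ε hε n hn⟩
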